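/- Any set S of vectors in a finite-dimensional normed space such that every vector in S has norm at least 1+ε (for some fixed ε > 0) and ‖x+y‖ = 2 for all distinct x, y ∈ S, is finite. -/
import Mathlib


theorem mset_separated_finite
    (X : Type*) [NormedAddCommGroup X] [NormedSpace ℝ X] [FiniteDimensional ℝ X]
    (ε : ℝ) (hε : 0 < ε) (S : Set X)
    (hnorm : ∀ x ∈ S, 1 + ε ≤ ‖x‖)
    (hmid : ∀ x ∈ S, ∀ y ∈ S, x ≠ y → ‖x + y‖ = 2) :
    S.Finite := by
  -- separation: distinct points of S are at distance ≥ 2ε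
  have hsep : ∀ x ∈ S, ∀ y ∈ S, x ≠ y → 2 * ε ≤ ‖x - y‖ := by
    intro x hx y hy hxy
    have h1 : ‖(2 : ℝ) • x‖ ≤ ‖x + y‖ + ‖x - y‖ := by
      have : (2 : ℝ) • x = (x + y) + (x - y) := by module
      rw [this]; exact norm_add_le _ _
    rw [norm_smul, hmid x hx y hy hxy] at h1
    have hx1 := hnorm x hx
    simp only [Real.norm_ofNat] at h1
    nlinarith
  -- if S is a subsingleton, it is finite
  rcases Set.subsingleton_or_nontrivial S with hs | hs
  · exact hs.finite
  · obtain ⟨a, ha, b, hb, hab⟩ := hs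
    -- boundedness
    set C : ℝ := 2 + max ‖a‖ ‖b‖ with hC
    have hbound : ∀ x ∈ S, ‖x‖ ≤ C := by
      intro x hx
      obtain ⟨y, hy, hxy, hyle⟩ : ∃ y ∈ S, x ≠ y ∧ ‖y‖ ≤ max ‖a‖ ‖b‖ := by
        by_cases h : x = a
        · exact ⟨b, hb, h ▸ hab, le_max_right _ _⟩
        · exact ⟨a, ha, h, le_max_left _ _⟩
      have h := hmid x hx y hy hxy
      have hxeq : x = (x + y) + (-y) := by abel
      have h2 : ‖x‖ ≤ ‖x + y‖ + ‖y‖ := by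
        calc ‖x‖ = ‖(x + y) + (-y)‖ := by rw [← hxeq]
          _ ≤ ‖x + y‖ + ‖-y‖ := norm_add_le _ _
          _ = ‖x + y‖ + ‖y‖ := by rw [norm_neg]
      rw [h] at h2
      simp only [hC]
      linarith
    have hsub : S ⊆ Metric.closedBall (0 : X) C := by
      intro x hx
      simpa [Metric.mem_closedBall, dist_eq_norm] using hbound x hx
    have htb : TotallyBounded S :=
      (isCompact_closedBall (0 : X) C).totallyBounded.subset hsub
    -- cover S by finitely many balls of radius ε
    obtain ⟨t, htfin, hcov⟩ := (Metric.totallyBounded_iff.mp htb) ε hε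
    have : S ⊆ ⋃ y ∈ t, S ∩ Metric.ball y ε := by
      intro x hx
      obtain ⟨y, hy, hxy⟩ := Set.mem_iUnion₂.mp (hcov hx)
      exact Set.mem_iUnion₂.mpr ⟨y, hy, hx, hxy⟩
    refine Set.Finite.subset (Set.Finite.biUnion htfin fun y _ => ?_) this
    -- each ball meets S in at most one point
    refine Set.Subsingleton.finite ?_
    intro u ⟨huS, hu⟩ v ⟨hvS, hv⟩
    by_contra huv
    have h1 := hsep u huS v hvS huv
    have h2 : ‖u - v‖ < 2 * ε := by
      rw [Metric.mem_ball] at hu hv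
      calc ‖u - v‖ = dist u v := (dist_eq_norm u v).symm
        _ ≤ dist u y + dist y v := dist_triangle u y v
        _ = dist u y + dist v y := by rw [dist_comm y v]
        _ < ε + ε := add_lt_add hu hv
        _ = 2 * ε := by ring
    linarith
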